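/- Let G ⊊ ℝⁿ be a domain and J = closure of B^n(k,r) a closed ball contained in G, with d = dist(J, ∂G) > 0. Then the s_G-diameter of J, i.e., sup_{x,y ∈ J} s_G(x,y), equals r/(r+d). -/

import Mathlib

open Metric Set

lemma key_ineq {E : Type*} [NormedAddCommGroup E] [InnerProductSpace ℝ E]
    {r ρ : ℝ} (hr : 0 < r) (hρ : r ≤ ρ) {x z : E} (hx : ‖x‖ ≤ r) (hz : ‖z‖ = ρ) :
    (ρ / r) * ‖(r ^ 2 / ρ ^ 2) • z - x‖ ≤ ‖z - x‖ := by
  have hρ0 : 0 < ρ := hr.trans_le hρ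
  have hxn : 0 ≤ ‖x‖ := norm_nonneg _
  refine le_of_pow_le_pow_left₀ two_ne_zero (norm_nonneg _) ?_
  have hA : ‖z - x‖ ^ 2 = ρ ^ 2 - 2 * inner ℝ z x + ‖x‖ ^ 2 := by
    rw [norm_sub_sq_real, hz]
  have hB : ‖(r ^ 2 / ρ ^ 2) • z - x‖ ^ 2
      = (r ^ 2 / ρ ^ 2) ^ 2 * ρ ^ 2 - 2 * ((r ^ 2 / ρ ^ 2) * inner ℝ z x) + ‖x‖ ^ 2 := by
    rw [norm_sub_sq_real, real_inner_smul_left, norm_smul, Real.norm_eq_abs,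
      abs_of_pos (by positivity), mul_pow, hz]
  rw [mul_pow, hA, hB]
  have hr2 : (0:ℝ) < r ^ 2 := by positivity
  have hρ2 : (0:ℝ) < ρ ^ 2 := by positivity
  have hL : (ρ/r)^2 * ((r^2/ρ^2)^2*ρ^2 - 2*((r^2/ρ^2)*inner ℝ z x) + ‖x‖^2)
      = r^2 - 2*inner ℝ z x + (ρ^2/r^2)*‖x‖^2 := by
    field_simp
  rw [hL]
  have h2 : (ρ^2/r^2)*‖x‖^2 ≤ ρ^2 - r^2 + ‖x‖^2 := by
    rw [div_mul_eq_mul_div, div_le_iff₀ hr2]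
    nlinarith [mul_nonneg (by nlinarith : (0:ℝ) ≤ ρ^2 - r^2) (by nlinarith : (0:ℝ) ≤ r^2 - ‖x‖^2)]
  linarith

/-- Triangular ratio metric of a domain `G`. -/
noncomputable def sG {n : ℕ} (G : Set (EuclideanSpace ℝ (Fin n))) (x y : EuclideanSpace ℝ (Fin n)) : ℝ :=
  dist x y / sInf ((fun z => dist x z + dist z y) '' frontier G)

theorem stmt_13 {n : ℕ} (G : Set (EuclideanSpace ℝ (Fin n)))
    (hG_open : IsOpen G) (hG_ne : G.Nonempty) (hG_proper : G ≠ Set.univ)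
    (hG_conn : IsConnected G)
    (k : EuclideanSpace ℝ (Fin n)) (r d : ℝ) (hr : 0 < r)
    (hJG : Metric.closedBall k r ⊆ G)
    (hd : d = sInf (Set.image2 dist (Metric.closedBall k r) (frontier G)))
    (hd0 : 0 < d) :
    sSup {q : ℝ | ∃ x ∈ Metric.closedBall k r, ∃ y ∈ Metric.closedBall k r, q = sG G x y} =
      r / (r + d) := by
  set R := r + d with hRdef
  have hR0 : 0 < R := by positivity
  have hrR : r < R := by simp [hRdef]; linarith
  -- frontier nonempty
  have hfr : (frontier G).Nonempty := by
    rw [nonempty_frontier_iff]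
    exact ⟨hG_ne, hG_proper⟩
  have himg_ne : (Set.image2 dist (Metric.closedBall k r) (frontier G)).Nonempty := by
    obtain ⟨z, hz⟩ := hfr
    exact ⟨dist k z, Set.mem_image2_of_mem (mem_closedBall_self hr.le) hz⟩
  have himg_bdd : BddBelow (Set.image2 dist (Metric.closedBall k r) (frontier G)) := by
    refine ⟨0, ?_⟩
    rintro q ⟨a, _, b, _, rfl⟩
    exact dist_nonneg
  -- all frontier points are at distance ≥ R from k
  have hzR : ∀ z ∈ frontier G, R ≤ dist z k := by
    intro z hz
    have hzG : z ∉ G := by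
      rw [hG_open.frontier_eq] at hz
      exact hz.2
    have hDgt : r < dist z k :=
      lt_of_not_ge fun h => hzG (hJG (mem_closedBall.mpr h))
    have hD0 : (0:ℝ) < dist z k := hr.trans hDgt
    set p := k + (r / dist z k) • (z - k) with hp
    have hzk : ‖z - k‖ = dist z k := (dist_eq_norm z k).symm
    have hpk : dist p k = r := by
      rw [dist_eq_norm, hp]
      have : k + (r / dist z k) • (z - k) - k = (r / dist z k) • (z - k) := by module
      rw [this, norm_smul, Real.norm_eq_abs, abs_of_pos (by positivity), hzk]
      field_simp
    have hpz : dist p z = dist z k - r := by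
      rw [dist_eq_norm, hp]
      have : k + (r / dist z k) • (z - k) - z = (r / dist z k - 1) • (z - k) := by module
      rw [this, norm_smul, Real.norm_eq_abs,
        abs_of_neg (by rw [sub_neg, div_lt_one hD0]; exact hDgt), hzk]
      field_simp
      ring
    have hmem : dist p z ∈ Set.image2 dist (Metric.closedBall k r) (frontier G) :=
      Set.mem_image2_of_mem (mem_closedBall.mpr hpk.le) hz
    have hdle : d ≤ dist p z := hd ▸ csInf_le himg_bdd hmem
    rw [hpz] at hdle
    simp only [hRdef]
    linarith
  -- key pointwise estimate
  have hkey : ∀ x ∈ Metric.closedBall k r, ∀ y ∈ Metric.closedBall k r, ∀ z ∈ frontier G,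
      (R / r) * dist x y ≤ dist x z + dist z y := by
    intro x hx y hy z hz
    have hρR : R ≤ dist z k := hzR z hz
    have hρr : r ≤ dist z k := hrR.le.trans hρR
    set ρ := dist z k with hρdef
    have hρ0 : 0 < ρ := hr.trans_le hρr
    set w := k + (r ^ 2 / ρ ^ 2) • (z - k) with hw
    have hxw : (r ^ 2 / ρ ^ 2) • (z - k) - (x - k) = w - x := by rw [hw]; module
    have hyw : (r ^ 2 / ρ ^ 2) • (z - k) - (y - k) = w - y := by rw [hw]; module
    have hx' : ‖x - k‖ ≤ r := by rw [← dist_eq_norm]; exact mem_closedBall.mp hx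
    have hy' : ‖y - k‖ ≤ r := by rw [← dist_eq_norm]; exact mem_closedBall.mp hy
    have hz' : ‖z - k‖ = ρ := (dist_eq_norm z k).symm
    have h1 := key_ineq hr hρr hx' hz'
    have h2 := key_ineq hr hρr hy' hz'
    rw [hxw] at h1
    rw [hyw] at h2
    have h1' : (ρ / r) * dist w x ≤ dist x z := by
      rw [dist_eq_norm w x, dist_comm x z, dist_eq_norm z x]
      have e : z - k - (x - k) = z - x := by module
      rw [e] at h1
      exact h1
    have h2' : (ρ / r) * dist w y ≤ dist z y := by
      rw [dist_eq_norm w y, dist_eq_norm z y]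
      have e : z - k - (y - k) = z - y := by module
      rw [e] at h2
      exact h2
    have htri : dist x y ≤ dist w x + dist w y := by
      rw [dist_comm w x]
      exact dist_triangle x w y
    have hRρ : R / r ≤ ρ / r := by gcongr
    calc (R / r) * dist x y ≤ (ρ / r) * dist x y := by
          exact mul_le_mul_of_nonneg_right hRρ dist_nonneg
      _ ≤ (ρ / r) * (dist w x + dist w y) := by
          exact mul_le_mul_of_nonneg_left htri (by positivity)
      _ = (ρ / r) * dist w x + (ρ / r) * dist w y := by ring
      _ ≤ dist x z + dist z y := add_le_add h1' h2'
  -- lower bound on the infimum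
  have hInf_lb : ∀ x ∈ Metric.closedBall k r, ∀ y ∈ Metric.closedBall k r,
      (R / r) * dist x y ≤ sInf ((fun z => dist x z + dist z y) '' frontier G) := by
    intro x hx y hy
    refine le_csInf (hfr.image _) ?_
    rintro q ⟨z, hz, rfl⟩
    exact hkey x hx y hy z hz
  -- upper bound for every element of the set
  have hub : ∀ q ∈ {q : ℝ | ∃ x ∈ Metric.closedBall k r, ∃ y ∈ Metric.closedBall k r,
      q = sG G x y}, q ≤ r / R := by
    rintro q ⟨x, hx, y, hy, rfl⟩
    rw [sG]
    rcases eq_or_lt_of_le (dist_nonneg : (0:ℝ) ≤ dist x y) with h0 | h0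
    · rw [← h0, zero_div]
      positivity
    · have hI := hInf_lb x hx y hy
      have hIpos : 0 < sInf ((fun z => dist x z + dist z y) '' frontier G) :=
        lt_of_lt_of_le (by positivity) hI
      rw [div_le_div_iff₀ hIpos hR0]
      have hmul := mul_le_mul_of_nonneg_left hI hr.le
      have : r * ((R / r) * dist x y) = R * dist x y := by field_simp
      rw [this] at hmul
      nlinarith
  -- existence of a nearest frontier point
  have hz₀ : ∃ z ∈ frontier G, dist z k = R := by
    have hlt : sInf (Set.image2 dist (Metric.closedBall k r) (frontier G)) < d + 1 := by
      rw [← hd]; linarith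
    obtain ⟨q, hq, hq1⟩ := exists_lt_of_csInf_lt himg_ne hlt
    obtain ⟨a, ha, b, hb, rfl⟩ := hq
    have hbk : dist b k ≤ R + 1 := by
      have h1 := dist_triangle b a k
      have hak : dist a k ≤ r := mem_closedBall.mp ha
      have h2 : dist b a = dist a b := dist_comm b a
      simp only [hRdef]
      linarith
    set T := frontier G ∩ Metric.closedBall k (R + 1) with hT
    have hTne : T.Nonempty := ⟨b, hb, mem_closedBall.mpr hbk⟩
    have hTc : IsCompact T := (isCompact_closedBall k (R + 1)).inter_left isClosed_frontier
    obtain ⟨z₀, hz₀T, hmin⟩ := hTc.exists_isMinOn hTne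
      ((continuous_id.dist continuous_const).continuousOn :
        ContinuousOn (fun z => dist z k) T)
    refine ⟨z₀, hz₀T.1, le_antisymm ?_ (hzR z₀ hz₀T.1)⟩
    by_contra hcon
    push_neg at hcon
    set ε := min (dist z₀ k - R) 1 with hε
    have hε0 : 0 < ε := lt_min (by linarith) one_pos
    have hε1 : ε ≤ 1 := min_le_right _ _
    have hall : ∀ z ∈ frontier G, R + ε ≤ dist z k := by
      intro z hz
      by_cases hzb : dist z k ≤ R + 1
      · have hzT : z ∈ T := ⟨hz, mem_closedBall.mpr hzb⟩
        have hmz : dist z₀ k ≤ dist z k := hmin hzT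
        have : ε ≤ dist z₀ k - R := min_le_left _ _
        linarith
      · push_neg at hzb
        linarith
    have hinf2 : d + ε ≤ sInf (Set.image2 dist (Metric.closedBall k r) (frontier G)) := by
      refine le_csInf himg_ne ?_
      rintro q ⟨a', ha', b', hb', rfl⟩
      have h1 := dist_triangle b' a' k
      have h2 : dist b' a' = dist a' b' := dist_comm b' a'
      have hak : dist a' k ≤ r := mem_closedBall.mp ha'
      have h3 := hall b' hb'
      simp only [hRdef] at h3 ⊢
      linarith
    rw [← hd] at hinf2
    linarith
  obtain ⟨z₀, hz₀G, hz₀R⟩ := hz₀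
  -- the extremal pair
  set u : EuclideanSpace ℝ (Fin n) := (r / R) • (z₀ - k) with hu
  have hzk₀ : ‖z₀ - k‖ = R := by rw [← dist_eq_norm]; exact hz₀R
  have hun : ‖u‖ = r := by
    rw [hu, norm_smul, Real.norm_eq_abs, abs_of_pos (by positivity), hzk₀]
    field_simp
  set x₀ : EuclideanSpace ℝ (Fin n) := k + u with hx₀
  set y₀ : EuclideanSpace ℝ (Fin n) := k - u with hy₀
  have hx₀m : x₀ ∈ Metric.closedBall k r := by
    rw [mem_closedBall, dist_eq_norm]
    have : x₀ - k = u := by rw [hx₀]; module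
    rw [this, hun]
  have hy₀m : y₀ ∈ Metric.closedBall k r := by
    rw [mem_closedBall, dist_eq_norm]
    have : y₀ - k = -u := by rw [hy₀]; module
    rw [this, norm_neg, hun]
  have hdxy : dist x₀ y₀ = 2 * r := by
    rw [dist_eq_norm]
    have : x₀ - y₀ = (2:ℝ) • u := by rw [hx₀, hy₀]; module
    rw [this, norm_smul]
    simp [hun]
  have hsum : dist x₀ z₀ + dist z₀ y₀ = 2 * R := by
    have h1 : dist x₀ z₀ = R - r := by
      rw [dist_eq_norm]
      have : x₀ - z₀ = (r / R - 1) • (z₀ - k) := by rw [hx₀, hu]; module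
      rw [this, norm_smul, Real.norm_eq_abs,
        abs_of_neg (by rw [sub_neg, div_lt_one hR0]; exact hrR), hzk₀]
      field_simp
      ring
    have h2 : dist z₀ y₀ = R + r := by
      rw [dist_eq_norm]
      have : z₀ - y₀ = (1 + r / R) • (z₀ - k) := by rw [hy₀, hu]; module
      rw [this, norm_smul, Real.norm_eq_abs, abs_of_pos (by positivity), hzk₀]
      field_simp
    rw [h1, h2]; ring
  have hInf_eq : sInf ((fun z => dist x₀ z + dist z y₀) '' frontier G) = 2 * R := by
    apply le_antisymm
    · have : dist x₀ z₀ + dist z₀ y₀ ∈ (fun z => dist x₀ z + dist z y₀) '' frontier G :=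
        ⟨z₀, hz₀G, rfl⟩
      calc sInf ((fun z => dist x₀ z + dist z y₀) '' frontier G)
          ≤ dist x₀ z₀ + dist z₀ y₀ := by
            refine csInf_le ⟨0, ?_⟩ this
            rintro q ⟨z, hz, rfl⟩
            positivity
        _ = 2 * R := hsum
    · have := hInf_lb x₀ hx₀m y₀ hy₀m
      rw [hdxy] at this
      have heq : (R / r) * (2 * r) = 2 * R := by field_simp
      rw [heq] at this
      exact this
  have hsG₀ : sG G x₀ y₀ = r / R := by
    rw [sG, hInf_eq, hdxy]
    rw [mul_div_mul_left _ _ (two_ne_zero)]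
  have hmem₀ : r / R ∈ {q : ℝ | ∃ x ∈ Metric.closedBall k r, ∃ y ∈ Metric.closedBall k r,
      q = sG G x y} := ⟨x₀, hx₀m, y₀, hy₀m, hsG₀.symm⟩
  exact le_antisymm (csSup_le ⟨r / R, hmem₀⟩ hub) (le_csSup ⟨r / R, hub⟩ hmem₀)
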